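/- Let A ⊆ ℝ² be the terminal set of a Steiner tree St, and suppose the open disk B_r(x) is disjoint from A. Then H¹(St ∩ B_r(x)) ≤ 2πr. -/

import Mathlib

open MeasureTheory Set Real
open scoped ENNReal NNReal

local notation "E2" => EuclideanSpace ℝ (Fin 2)

/-- chord-length estimate. -/
lemma chord_sq_le (a b : ℝ) :
    (Real.cos a - Real.cos b) ^ 2 + (Real.sin a - Real.sin b) ^ 2 ≤ (a - b) ^ 2 := by
  have hc : Real.cos (a - b) = Real.cos a * Real.cos b + Real.sin a * Real.sin b :=
    Real.cos_sub a b
  have h1 := Real.sin_sq_add_cos_sq a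
  have h2 := Real.sin_sq_add_cos_sq b
  have h3 : Real.sin ((a - b) / 2) ^ 2 ≤ ((a - b) / 2) ^ 2 := Real.sin_sq_le_sq
  have h4 : Real.cos ((a - b) / 2) ^ 2 = 1 / 2 + Real.cos (2 * ((a - b) / 2)) / 2 :=
    Real.cos_sq _
  have h5 := Real.sin_sq_add_cos_sq ((a - b) / 2)
  rw [show 2 * ((a - b) / 2) = a - b by ring] at h4
  nlinarith [sq_nonneg (a - b)]

/-- The circle parametrization of a sphere in `ℝ²`. -/
noncomputable def circleParam (x : E2) (r : ℝ) (θ : ℝ) : E2 :=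
  (WithLp.equiv 2 (Fin 2 → ℝ)).symm ![x 0 + r * Real.cos θ, x 1 + r * Real.sin θ]

lemma circleParam_lipschitz (x : E2) (r : ℝ) (hr : 0 ≤ r) :
    LipschitzWith r.toNNReal (circleParam x r) := by
  apply LipschitzWith.of_dist_le_mul
  intro a b
  have hdist : dist (circleParam x r a) (circleParam x r b) =
      Real.sqrt ((r * Real.cos a - r * Real.cos b) ^ 2 +
        (r * Real.sin a - r * Real.sin b) ^ 2) := by
    rw [EuclideanSpace.dist_eq, Fin.sum_univ_two]
    simp only [circleParam, WithLp.equiv_symm_apply, PiLp.toLp_apply, Matrix.cons_val_zero,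
      Matrix.cons_val_one, Matrix.head_cons, Real.dist_eq, sq_abs]
    congr 1
    ring
  rw [hdist]
  have key : (r * Real.cos a - r * Real.cos b) ^ 2 + (r * Real.sin a - r * Real.sin b) ^ 2
      ≤ (r * |a - b|) ^ 2 := by
    have := chord_sq_le a b
    have h2 : (r * |a - b|) ^ 2 = r ^ 2 * (a - b) ^ 2 := by
      rw [mul_pow, sq_abs]
    nlinarith [sq_nonneg r]
  calc Real.sqrt ((r * Real.cos a - r * Real.cos b) ^ 2 + (r * Real.sin a - r * Real.sin b) ^ 2)
      ≤ Real.sqrt ((r * |a - b|) ^ 2) := Real.sqrt_le_sqrt key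
    _ = r * |a - b| := Real.sqrt_sq (by positivity)
    _ = r.toNNReal * dist a b := by
        rw [Real.dist_eq, Real.coe_toNNReal r hr]

lemma sphere_subset_image (x : E2) (r : ℝ) (hr : 0 < r) :
    Metric.sphere x r ⊆ circleParam x r '' Set.Icc (-π) π := by
  intro y hy
  have hyd : dist y x = r := hy
  set z : ℂ := ⟨y 0 - x 0, y 1 - x 1⟩ with hz
  have habs : ‖z‖ = r := by
    rw [Complex.norm_def, Complex.normSq_mk]
    have : dist y x = Real.sqrt ((y 0 - x 0) * (y 0 - x 0) + (y 1 - x 1) * (y 1 - x 1)) := by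
      rw [EuclideanSpace.dist_eq, Fin.sum_univ_two]
      congr 1
      simp [Real.dist_eq, sq_abs]
      ring
    rw [← this, hyd]
  have hz0 : z ≠ 0 := by
    intro h
    rw [h, norm_zero] at habs
    exact hr.ne habs
  refine ⟨Complex.arg z, ?_, ?_⟩
  · exact Set.Ioc_subset_Icc_self (Complex.arg_mem_Ioc z)
  · have hcos : Real.cos (Complex.arg z) = (y 0 - x 0) / r := by
      rw [Complex.cos_arg hz0, habs]
    have hsin : Real.sin (Complex.arg z) = (y 1 - x 1) / r := by
      rw [Complex.sin_arg, habs]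
    apply (WithLp.equiv 2 (Fin 2 → ℝ)).symm_apply_eq.mpr
    funext i
    have hrne := hr.ne'
    fin_cases i
    · show x 0 + r * Real.cos (Complex.arg z) = y 0
      rw [hcos]
      field_simp
      ring
    · show x 1 + r * Real.sin (Complex.arg z) = y 1
      rw [hsin]
      field_simp
      ring

lemma sphere_hausdorff_le (x : E2) (r : ℝ) (hr : 0 < r) :
    μH[1] (Metric.sphere x r) ≤ ENNReal.ofReal (2 * π * r) := by
  calc μH[1] (Metric.sphere x r)
      ≤ μH[1] (circleParam x r '' Set.Icc (-π) π) :=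
        measure_mono (sphere_subset_image x r hr)
    _ ≤ (r.toNNReal : ℝ≥0∞) ^ (1 : ℝ) * μH[1] (Set.Icc (-π) π) :=
        (circleParam_lipschitz x r hr.le).hausdorffMeasure_image_le zero_le_one _
    _ = ENNReal.ofReal (2 * π * r) := by
        rw [MeasureTheory.hausdorffMeasure_real, Real.volume_Icc, ENNReal.rpow_one]
        have h1 : π - -π = 2 * π := by ring
        have h2 : (r.toNNReal : ℝ≥0∞) = ENNReal.ofReal r := rfl
        rw [h1, h2, ← ENNReal.ofReal_mul hr.le]
        congr 1
        ring

/-- The separation argument: if the competitor `(Z \ B) ∪ S` admits a separation with the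
sphere on the `u` side and something on the `v` side, we get a contradiction with
preconnectedness of `Z`. -/
lemma steiner_sep {X : Type*} [PseudoMetricSpace X] {Z : Set X} (hZ : IsPreconnected Z)
    {x : X} {r : ℝ} (hball : (Z ∩ Metric.ball x r).Nonempty)
    {u v : Set X} (hu : IsOpen u) (hv : IsOpen v)
    (hcov : (Z \ Metric.ball x r) ∪ Metric.sphere x r ⊆ u ∪ v)
    (hsph : Metric.sphere x r ⊆ u)
    (hvne : (((Z \ Metric.ball x r) ∪ Metric.sphere x r) ∩ v).Nonempty)
    (hempty : ((Z \ Metric.ball x r) ∪ Metric.sphere x r) ∩ (u ∩ v) = ∅) : False := by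
  set T := (Z \ Metric.ball x r) ∪ Metric.sphere x r with hT
  have hTuv : ∀ z ∈ T, z ∈ u → z ∈ v → False := by
    intro z hz h1 h2
    have : z ∈ T ∩ (u ∩ v) := ⟨hz, h1, h2⟩
    rw [hempty] at this
    exact this
  -- apply preconnectedness of Z to `u ∪ ball` and `v \ closedBall`
  have h1 : IsOpen (u ∪ Metric.ball x r) := hu.union Metric.isOpen_ball
  have h2 : IsOpen (v ∩ (Metric.closedBall x r)ᶜ) :=
    hv.inter Metric.isClosed_closedBall.isOpen_compl
  have hcov' : Z ⊆ (u ∪ Metric.ball x r) ∪ (v ∩ (Metric.closedBall x r)ᶜ) := by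
    intro z hz
    by_cases hzb : z ∈ Metric.ball x r
    · exact Or.inl (Or.inr hzb)
    · have hzT : z ∈ T := Or.inl ⟨hz, hzb⟩
      rcases hcov hzT with h | h
      · exact Or.inl (Or.inl h)
      · by_cases hzs : z ∈ Metric.sphere x r
        · exact absurd (hTuv z hzT (hsph hzs) h) not_false
        · refine Or.inr ⟨h, fun hc => ?_⟩
          rw [← Metric.ball_union_sphere] at hc
          rcases hc with hc | hc
          · exact hzb hc
          · exact hzs hc
  have hne1 : (Z ∩ (u ∪ Metric.ball x r)).Nonempty := by
    obtain ⟨w, hw1, hw2⟩ := hball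
    exact ⟨w, hw1, Or.inr hw2⟩
  have hne2 : (Z ∩ (v ∩ (Metric.closedBall x r)ᶜ)).Nonempty := by
    obtain ⟨w, hwT, hwv⟩ := hvne
    have hwu : w ∉ u := fun h => hTuv w hwT h hwv
    have hws : w ∉ Metric.sphere x r := fun h => hwu (hsph h)
    rcases hwT with hw | hw
    · refine ⟨w, hw.1, hwv, fun hc => ?_⟩
      rw [← Metric.ball_union_sphere] at hc
      rcases hc with hc | hc
      · exact hw.2 hc
      · exact hws hc
    · exact absurd hw hws
  obtain ⟨p, hpZ, hp1, hp2⟩ := hZ _ _ h1 h2 hcov' hne1 hne2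
  have hpb : p ∉ Metric.ball x r := fun h => hp2.2 (Metric.ball_subset_closedBall h)
  have hpu : p ∈ u := by
    rcases hp1 with h | h
    · exact h
    · exact absurd h hpb
  exact hTuv p (Or.inl ⟨hpZ, hpb⟩) hpu hp2.1

/-- Connectedness of the competitor `(Z \ B) ∪ ∂B`. -/
lemma competitor_connected (Z : Set E2) (hZ : IsPreconnected Z)
    (x : E2) (r : ℝ) (hr : 0 < r) (hball : (Z ∩ Metric.ball x r).Nonempty) :
    IsConnected ((Z \ Metric.ball x r) ∪ Metric.sphere x r) := by
  have hrank : (1 : Cardinal) < Module.rank ℝ E2 := by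
    rw [← Module.finrank_eq_rank, finrank_euclideanSpace_fin]
    exact_mod_cast one_lt_two
  have hsphconn : IsPreconnected (Metric.sphere x r) :=
    (isConnected_sphere hrank x hr.le).isPreconnected
  have hsphne : (Metric.sphere x r).Nonempty := NormedSpace.sphere_nonempty.mpr hr.le
  constructor
  · exact hsphne.mono subset_union_right
  · intro u v hu hv hcov ⟨a, haT, hau⟩ ⟨b, hbT, hbv⟩
    by_contra hne
    rw [Set.not_nonempty_iff_eq_empty] at hne
    have hsphcov : Metric.sphere x r ⊆ u ∪ v :=
      fun y hy => hcov (Or.inr hy)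
    have hsub : Metric.sphere x r ⊆ u ∨ Metric.sphere x r ⊆ v := by
      rcases Set.eq_empty_or_nonempty (Metric.sphere x r ∩ u) with h | h
      · right
        intro y hy
        rcases hsphcov hy with h' | h'
        · exact (Set.eq_empty_iff_forall_notMem.mp h y ⟨hy, h'⟩).elim
        · exact h'
      · rcases Set.eq_empty_or_nonempty (Metric.sphere x r ∩ v) with h' | h'
        · left
          intro y hy
          rcases hsphcov hy with h'' | h''
          · exact h''
          · exact (Set.eq_empty_iff_forall_notMem.mp h' y ⟨hy, h''⟩).elim
        · exfalso
          obtain ⟨p, hp⟩ := hsphconn u v hu hv hsphcov h h'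
          have : p ∈ ((Z \ Metric.ball x r) ∪ Metric.sphere x r) ∩ (u ∩ v) :=
            ⟨Or.inr hp.1, hp.2⟩
          rw [hne] at this
          exact this
    rcases hsub with hsu | hsv
    · exact steiner_sep hZ hball hu hv hcov hsu ⟨b, hbT, hbv⟩ hne
    · refine steiner_sep hZ hball hv hu ?_ hsv ⟨a, haT, hau⟩ ?_
      · intro z hz
        exact (hcov hz).symm
      · rw [Set.inter_comm v u]
        exact hne

/-- If the open disk `B_r(x)` is disjoint from the terminal set `A` of a planar
Steiner tree `St`, then the length of `St` inside the disk is at most `2πr`. -/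
theorem steiner_ball_length_le (A St : Set (EuclideanSpace ℝ (Fin 2)))
    (hA : IsCompact A)
    (hSt : IsConnected St)
    (hconn : IsConnected (St ∪ A))
    (hmin : ∀ S : Set (EuclideanSpace ℝ (Fin 2)), IsConnected (S ∪ A) → μH[1] St ≤ μH[1] S)
    (hfin : μH[1] St < ⊤)
    (x : EuclideanSpace ℝ (Fin 2)) (r : ℝ) (hr : 0 < r)
    (hdisj : Metric.ball x r ∩ A = ∅) :
    μH[1] (St ∩ Metric.ball x r) ≤ ENNReal.ofReal (2 * π * r) := by
  rcases Set.eq_empty_or_nonempty (St ∩ Metric.ball x r) with hemp | hball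
  · rw [hemp, measure_empty]
    exact zero_le
  -- the competitor
  set B := Metric.ball x r with hB
  set S := (St \ B) ∪ Metric.sphere x r with hSdef
  have hAB : ∀ z ∈ A, z ∉ B := by
    intro z hz hzB
    have : z ∈ B ∩ A := ⟨hzB, hz⟩
    rw [hdisj] at this
    exact this
  have hSA : S ∪ A = ((St ∪ A) \ B) ∪ Metric.sphere x r := by
    ext z
    constructor
    · rintro ((⟨h1, h2⟩ | h) | hA')
      · exact Or.inl ⟨Or.inl h1, h2⟩
      · exact Or.inr h
      · exact Or.inl ⟨Or.inr hA', hAB z hA'⟩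
    · rintro (⟨h1 | h1, h2⟩ | h)
      · exact Or.inl (Or.inl ⟨h1, h2⟩)
      · exact Or.inr h1
      · exact Or.inl (Or.inr h)
  have hZball : ((St ∪ A) ∩ B).Nonempty :=
    hball.mono (Set.inter_subset_inter_left _ Set.subset_union_left)
  have hSconn : IsConnected (S ∪ A) := by
    rw [hSA]
    exact competitor_connected _ hconn.isPreconnected x r hr hZball
  have hS := hmin S hSconn
  have h2 : μH[1] S ≤ μH[1] (St \ B) + μH[1] (Metric.sphere x r) :=
    measure_union_le _ _
  have h3 : μH[1] (St ∩ B) + μH[1] (St \ B) = μH[1] St :=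
    measure_inter_add_diff St measurableSet_ball
  have hsph := sphere_hausdorff_le x r hr
  have hdne : μH[1] (St \ B) ≠ ⊤ :=
    (lt_of_le_of_lt (measure_mono Set.diff_subset) hfin).ne
  have : μH[1] (St ∩ B) + μH[1] (St \ B) ≤ ENNReal.ofReal (2 * π * r) + μH[1] (St \ B) := by
    calc μH[1] (St ∩ B) + μH[1] (St \ B) = μH[1] St := h3
      _ ≤ μH[1] S := hS
      _ ≤ μH[1] (St \ B) + μH[1] (Metric.sphere x r) := h2
      _ ≤ μH[1] (St \ B) + ENNReal.ofReal (2 * π * r) := by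
          exact add_le_add le_rfl hsph
      _ = ENNReal.ofReal (2 * π * r) + μH[1] (St \ B) := add_comm _ _
  exact (ENNReal.add_le_add_iff_right hdne).mp this
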